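/- For every integer m ≥ 0 there exist a constant H > 0 and a function h : ℝ → ℝ such that (i) h(y) = 0 for all y outside the interval [−1, 1); (ii) |h(y)| ≤ H for all y; and (iii) for every θ ∈ [0, 1) and every k ∈ {0, 1, …, m}, Σ_{j=0}^{m} (2(j+θ)/(m+1) − 1)^k · h(2(j+θ)/(m+1) − 1) equals 1 if k = 0 and equals 0 if 1 ≤ k ≤ m. -/

import Mathlib

open Finset Polynomial

/-- The shifted nodes. -/
noncomputable def nodeV (m : ℕ) (θ : ℝ) (i : ℕ) : ℝ := 2 * ((i : ℝ) + θ) / ((m : ℝ) + 1) - 1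

/-- The smoothing kernel. -/
noncomputable def hker (m : ℕ) (y : ℝ) : ℝ :=
  if y ∈ Set.Ico (-1 : ℝ) 1 then
    (Lagrange.basis (Finset.range (m + 1))
        (nodeV m (Int.fract ((y + 1) * ((m : ℝ) + 1) / 2)))
        (⌊(y + 1) * ((m : ℝ) + 1) / 2⌋.toNat)).eval 0
  else 0

lemma mpos (m : ℕ) : (0 : ℝ) < (m : ℝ) + 1 := by positivity

lemma nodeV_inj (m : ℕ) (θ : ℝ) : Function.Injective (nodeV m θ) := by
  intro i j hij
  have hm := (mpos m).ne'
  unfold nodeV at hij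
  field_simp at hij
  have hij' : (i : ℝ) = j := by linarith
  exact_mod_cast hij'

lemma nodeV_mem (m : ℕ) {θ : ℝ} (hθ : θ ∈ Set.Ico (0 : ℝ) 1) {j : ℕ} (hj : j ≤ m) :
    nodeV m θ j ∈ Set.Ico (-1 : ℝ) 1 := by
  obtain ⟨h0, h1⟩ := hθ
  have hm := mpos m
  have hjm : (j : ℝ) ≤ (m : ℝ) := by exact_mod_cast hj
  constructor
  · have : 0 ≤ 2 * ((j : ℝ) + θ) / ((m : ℝ) + 1) := by positivity
    unfold nodeV; linarith
  · have : 2 * ((j : ℝ) + θ) / ((m : ℝ) + 1) < 2 := by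
      rw [div_lt_iff₀ hm]; nlinarith
    unfold nodeV; linarith

lemma nodeV_abs_le (m : ℕ) {θ : ℝ} (hθ : θ ∈ Set.Ico (0 : ℝ) 1) {j : ℕ} (hj : j ≤ m) :
    |nodeV m θ j| ≤ 1 := by
  obtain ⟨h0, h1⟩ := nodeV_mem m hθ hj
  rw [abs_le]; constructor <;> linarith

lemma recover (m : ℕ) {θ : ℝ} (hθ : θ ∈ Set.Ico (0 : ℝ) 1) (j : ℕ) :
    (nodeV m θ j + 1) * ((m : ℝ) + 1) / 2 = (j : ℝ) + θ := by
  have hm := (mpos m).ne'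
  unfold nodeV
  field_simp
  ring

lemma hker_node (m : ℕ) {θ : ℝ} (hθ : θ ∈ Set.Ico (0 : ℝ) 1) {j : ℕ} (hj : j ≤ m) :
    hker m (nodeV m θ j) =
      (Lagrange.basis (Finset.range (m + 1)) (nodeV m θ) j).eval 0 := by
  have hrec := recover m hθ j
  have hfr : Int.fract ((nodeV m θ j + 1) * ((m : ℝ) + 1) / 2) = θ := by
    rw [hrec]
    rw [show ((j : ℝ) + θ) = ((j : ℤ) : ℝ) + θ by push_cast; ring]
    rw [Int.fract_intCast_add, Int.fract_eq_self.2 ⟨hθ.1, hθ.2⟩]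
  have hfl : ⌊(nodeV m θ j + 1) * ((m : ℝ) + 1) / 2⌋.toNat = j := by
    rw [hrec]
    rw [show ((j : ℝ) + θ) = ((j : ℤ) : ℝ) + θ by push_cast; ring]
    rw [Int.floor_intCast_add, Int.floor_eq_zero_iff.2 ⟨hθ.1, hθ.2⟩]
    simp
  unfold hker
  rw [if_pos (nodeV_mem m hθ hj), hfr, hfl]

lemma vdiff (m : ℕ) (θ : ℝ) (j i : ℕ) :
    nodeV m θ j - nodeV m θ i = 2 * ((j : ℝ) - (i : ℝ)) / ((m : ℝ) + 1) := by
  have hm := (mpos m).ne'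
  unfold nodeV
  field_simp
  ring

lemma basis_eval_bound (m : ℕ) {θ : ℝ} (hθ : θ ∈ Set.Ico (0 : ℝ) 1) {j : ℕ} (hj : j ≤ m) :
    |(Lagrange.basis (Finset.range (m + 1)) (nodeV m θ) j).eval 0| ≤ (((m : ℝ) + 1) / 2) ^ m := by
  have hm := mpos m
  have hjr : j ∈ Finset.range (m + 1) := Finset.mem_range.2 (Nat.lt_succ_of_le hj)
  have heval : (Lagrange.basis (Finset.range (m + 1)) (nodeV m θ) j).eval 0 =
      ∏ i ∈ (Finset.range (m + 1)).erase j,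
        ((nodeV m θ j - nodeV m θ i)⁻¹ * (0 - nodeV m θ i)) := by
    rw [Lagrange.basis, Polynomial.eval_prod]
    exact Finset.prod_congr rfl fun i _ => by simp [Lagrange.basisDivisor]
  rw [heval, Finset.abs_prod]
  have hcard : ((Finset.range (m + 1)).erase j).card = m := by
    rw [Finset.card_erase_of_mem hjr, Finset.card_range]
    omega
  calc ∏ i ∈ (Finset.range (m + 1)).erase j,
        |(nodeV m θ j - nodeV m θ i)⁻¹ * (0 - nodeV m θ i)|
      ≤ ∏ _i ∈ (Finset.range (m + 1)).erase j, (((m : ℝ) + 1) / 2) := by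
        refine Finset.prod_le_prod (fun i _ => abs_nonneg _) fun i hi => ?_
        obtain ⟨hij, hir⟩ := Finset.mem_erase.1 hi
        have him : i ≤ m := Nat.lt_succ_iff.1 (Finset.mem_range.1 hir)
        have h1 : |0 - nodeV m θ i| ≤ 1 := by
          rw [zero_sub, abs_neg]; exact nodeV_abs_le m hθ him
        have hne : (j : ℤ) ≠ (i : ℤ) := by
          intro h; exact hij (by exact_mod_cast h.symm)
        have h4 : (1 : ℤ) ≤ |(j : ℤ) - (i : ℤ)| := Int.one_le_abs (sub_ne_zero.2 hne)
        have h3 : (1 : ℝ) ≤ |(j : ℝ) - (i : ℝ)| := by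
          have h5 : ((1 : ℤ) : ℝ) ≤ ((|(j : ℤ) - (i : ℤ)| : ℤ) : ℝ) := Int.cast_le.mpr h4
          rw [Int.cast_abs] at h5
          push_cast at h5
          exact h5
        have h2 : 2 / ((m : ℝ) + 1) ≤ |nodeV m θ j - nodeV m θ i| := by
          rw [vdiff m θ j i, abs_div, abs_of_pos hm, abs_mul, abs_two]
          gcongr
          linarith
        calc |(nodeV m θ j - nodeV m θ i)⁻¹ * (0 - nodeV m θ i)|
            = |0 - nodeV m θ i| / |nodeV m θ j - nodeV m θ i| := by
              rw [abs_mul, abs_inv, inv_mul_eq_div]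
          _ ≤ 1 / (2 / ((m : ℝ) + 1)) := by
              apply div_le_div₀ zero_le_one h1 (by positivity) h2
          _ = ((m : ℝ) + 1) / 2 := one_div_div _ _
      _ = (((m : ℝ) + 1) / 2) ^ m := by rw [Finset.prod_const, hcard]

lemma sum_nodes (m : ℕ) {θ : ℝ} (hθ : θ ∈ Set.Ico (0 : ℝ) 1) {k : ℕ} (hk : k ≤ m) :
    ∑ j ∈ Finset.range (m + 1), (nodeV m θ j) ^ k *
        (Lagrange.basis (Finset.range (m + 1)) (nodeV m θ) j).eval 0 =
      if k = 0 then 1 else 0 := by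
  have hinj : Set.InjOn (nodeV m θ) (Finset.range (m + 1)) := (nodeV_inj m θ).injOn
  have hdeg : ((X : ℝ[X]) ^ k).degree < (Finset.range (m + 1)).card := by
    rw [Finset.card_range, Polynomial.degree_X_pow]
    exact_mod_cast Nat.lt_succ_of_le hk
  have h := Lagrange.eq_interpolate hinj hdeg
  have h0 := congrArg (Polynomial.eval 0) h
  rw [Lagrange.interpolate_apply] at h0
  simp only [Polynomial.eval_pow, Polynomial.eval_X, Polynomial.eval_finset_sum,
    Polynomial.eval_mul, Polynomial.eval_C] at h0
  rw [← h0, zero_pow_eq]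

theorem stmt_11 (m : ℕ) :
    ∃ (H : ℝ) (h : ℝ → ℝ), 0 < H ∧
      (∀ y : ℝ, y ∉ Set.Ico (-1 : ℝ) 1 → h y = 0) ∧
      (∀ y : ℝ, |h y| ≤ H) ∧
      (∀ θ : ℝ, θ ∈ Set.Ico (0 : ℝ) 1 → ∀ k : ℕ, k ≤ m →
        ∑ j ∈ Finset.range (m + 1),
            (2 * (j + θ) / (m + 1) - 1) ^ k * h (2 * (j + θ) / (m + 1) - 1) =
          if k = 0 then 1 else 0) := by
  have hm := mpos m
  refine ⟨(((m : ℝ) + 1) / 2) ^ m, hker m, by positivity, ?_, ?_, ?_⟩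
  · intro y hy; unfold hker; rw [if_neg hy]
  · intro y
    by_cases hy : y ∈ Set.Ico (-1 : ℝ) 1
    · set t := (y + 1) * ((m : ℝ) + 1) / 2 with ht
      have ht0 : 0 ≤ t := by
        have : (0 : ℝ) ≤ y + 1 := by linarith [hy.1]
        positivity
      have ht1 : t < (m : ℝ) + 1 := by
        rw [ht, div_lt_iff₀ (by norm_num : (0:ℝ) < 2)]
        nlinarith [hy.2, hm]
      have hfl : ⌊t⌋.toNat ≤ m := by
        have h1 : ⌊t⌋ < (m : ℤ) + 1 := by
          apply Int.floor_lt.2; push_cast; exact ht1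
        omega
      have hθ : Int.fract t ∈ Set.Ico (0 : ℝ) 1 := ⟨Int.fract_nonneg t, Int.fract_lt_one t⟩
      have : hker m y = (Lagrange.basis (Finset.range (m + 1))
          (nodeV m (Int.fract t)) (⌊t⌋.toNat)).eval 0 := by
        unfold hker; rw [if_pos hy]
      rw [this]
      exact basis_eval_bound m hθ hfl
    · have : hker m y = 0 := by unfold hker; rw [if_neg hy]
      rw [this, abs_zero]; positivity
  · intro θ hθ k hk
    rw [← sum_nodes m hθ hk]
    refine Finset.sum_congr rfl fun j hj => ?_
    have hjm : j ≤ m := Nat.lt_succ_iff.1 (Finset.mem_range.1 hj)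
    rw [show (2 * ((j : ℝ) + θ) / ((m : ℝ) + 1) - 1) = nodeV m θ j from rfl,
      hker_node m hθ hjm]
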